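/- Let (X,d) be a finite metric space, f : [0,∞) → [0,∞) a continuous, non-increasing probability density on the non-negative reals with complementary cumulative distribution function F(s) := ∫_s^∞ f(t) dt and induced chaining functional h := F⁻¹ on (0,1]. Let (Z_x)_{x∈X} be real-valued random variables on a probability space (Ω, P) satisfying the tail bound P(|Z_u − Z_v| ≥ d(u,v)·s) ≤ F(s) for all distinct u,v ∈ X and all s ≥ 0. Then for every chaining tree C for (X,d) (with edge lengths computed via h), P( max_{x₁,x₂∈X} (Z_{x₁} − Z_{x₂}) > 2·val_h(C) ) ≤ 1/2. -/

import Mathlib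

open MeasureTheory

noncomputable section

/-- `f` is a continuous, non-increasing probability density on `[0,∞)`. -/
structure IsTailDensity (f : ℝ → ℝ) : Prop where
  nonneg : ∀ t : ℝ, 0 ≤ t → 0 ≤ f t
  continuousOn : ContinuousOn f (Set.Ici 0)
  antitoneOn : AntitoneOn f (Set.Ici 0)
  total : (∫ t in Set.Ioi (0:ℝ), f t) = 1

/-- The complementary cumulative distribution function `F(s) = ∫_s^∞ f(t) dt`. -/
def ccdf (f : ℝ → ℝ) (s : ℝ) : ℝ := ∫ t in Set.Ioi s, f t

/-- The chaining functional `h(p) = F⁻¹(p)`, defined on `(0,1]` as the least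
`s ≥ 0` with `F(s) ≤ p`. -/
def chainFn (f : ℝ → ℝ) (p : ℝ) : ℝ := sInf {s : ℝ | 0 ≤ s ∧ ccdf f s ≤ p}

/-- The sum of the edge labels of a rooted spanning tree described by a parent
function (one edge per non-root vertex). -/
def edgeLabelSum {X : Type*} [Fintype X] (root : X) (prob : X → ℝ) : ℝ :=
  letI := Classical.decEq X
  ∑ x ∈ Finset.univ.erase root, prob x

/-- A chaining tree on the finite metric space `X`: a rooted spanning tree on `X`
(described by a parent function), together with probability labels
`p_e ∈ (0,1/2]` on the edges `e = {x, parent x}` (`x ≠ root`) summing to at most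
`1/2`. -/
structure ChainingTree (X : Type*) [MetricSpace X] [Fintype X] where
  root : X
  parent : X → X
  prob : X → ℝ
  parent_root : parent root = root
  reaches_root : ∀ x : X, ∃ n : ℕ, parent^[n] x = root
  prob_mem : ∀ x : X, x ≠ root → prob x ∈ Set.Ioc (0:ℝ) (1/2)
  prob_sum : edgeLabelSum root prob ≤ 1/2

/-- The length `l_e = d(u,v)·h(p_e)` of the parent edge at `x` (zero at the root). -/
def edgeLen {X : Type*} [MetricSpace X] [Fintype X] (f : ℝ → ℝ)
    (C : ChainingTree X) (x : X) : ℝ :=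
  dist x (C.parent x) * chainFn f (C.prob x)

/-- The total length `Σ_{e ∈ P_x} l_e` of the path from `x` to the root (the path
reaches the root within `|X|` steps, and the root's term is `0`). -/
def pathLen {X : Type*} [MetricSpace X] [Fintype X] (f : ℝ → ℝ)
    (C : ChainingTree X) (x : X) : ℝ :=
  ∑ n ∈ Finset.range (Fintype.card X), edgeLen f C (C.parent^[n] x)

/-- The value `val_h(C) = max_{x∈X} Σ_{e ∈ P_x} l_e` of a chaining tree. -/
def ctVal {X : Type*} [MetricSpace X] [Fintype X] (f : ℝ → ℝ)
    (C : ChainingTree X) : ℝ :=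
  ⨆ x : X, pathLen f C x

namespace IsTailDensity

variable {f : ℝ → ℝ} (hf : IsTailDensity f)

lemma integrableOn (hf : IsTailDensity f) : IntegrableOn f (Set.Ioi 0) := by
  by_contra h
  have := hf.total
  rw [integral_undef h] at this
  norm_num at this

lemma integrableOn_Ioi (hf : IsTailDensity f) {s : ℝ} (hs : 0 ≤ s) :
    IntegrableOn f (Set.Ioi s) :=
  hf.integrableOn.mono_set (Set.Ioi_subset_Ioi hs)

lemma integrableOn_Ioc (hf : IsTailDensity f) {a b : ℝ} (ha : 0 ≤ a) :
    IntegrableOn f (Set.Ioc a b) :=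
  hf.integrableOn.mono_set (fun t ht => lt_of_le_of_lt ha ht.1)

lemma ccdf_split (hf : IsTailDensity f) {a b : ℝ} (ha : 0 ≤ a) (hab : a ≤ b) :
    ccdf f a = (∫ t in Set.Ioc a b, f t) + ccdf f b := by
  unfold ccdf
  rw [← Set.Ioc_union_Ioi_eq_Ioi hab,
    setIntegral_union Set.Ioc_disjoint_Ioi_same measurableSet_Ioi
      (hf.integrableOn_Ioc ha) (hf.integrableOn_Ioi (ha.trans hab))]

lemma ccdf_nonneg (hf : IsTailDensity f) {s : ℝ} (hs : 0 ≤ s) : 0 ≤ ccdf f s :=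
  setIntegral_nonneg measurableSet_Ioi (fun t ht => hf.nonneg t (hs.trans ht.le))

lemma ccdf_sub_le (hf : IsTailDensity f) {a b : ℝ} (ha : 0 ≤ a) (hab : a ≤ b) :
    ccdf f a - ccdf f b ≤ f a * (b - a) := by
  rw [hf.ccdf_split ha hab]
  have hmono : ∫ t in Set.Ioc a b, f t ≤ ∫ _t in Set.Ioc a b, f a := by
    refine setIntegral_mono_on (hf.integrableOn_Ioc ha)
      (integrableOn_const measure_Ioc_lt_top.ne) measurableSet_Ioc
      (fun t ht => hf.antitoneOn ha (ha.trans ht.1.le) ht.1.le)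
  have hconst : ∫ _t in Set.Ioc a b, f a = f a * (b - a) := by
    rw [setIntegral_const, Measure.real, Real.volume_Ioc, smul_eq_mul,
      ENNReal.toReal_ofReal (by linarith), mul_comm]
  linarith

lemma exists_ccdf_le (hf : IsTailDensity f) {p : ℝ} (hp : 0 < p) :
    ∃ s : ℝ, 0 ≤ s ∧ ccdf f s ≤ p := by
  have hmono : Monotone (fun n : ℕ => Set.Ioc (0:ℝ) n) := fun m n hmn =>
    Set.Ioc_subset_Ioc le_rfl (by exact_mod_cast hmn)
  have hU : (⋃ n : ℕ, Set.Ioc (0:ℝ) n) = Set.Ioi 0 := by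
    ext t
    simp only [Set.mem_iUnion, Set.mem_Ioc, Set.mem_Ioi]
    constructor
    · rintro ⟨n, h, _⟩; exact h
    · intro ht
      obtain ⟨n, hn⟩ := exists_nat_ge t
      exact ⟨n, ht, hn⟩
  have htend : Filter.Tendsto (fun n : ℕ => ∫ t in Set.Ioc (0:ℝ) n, f t)
      Filter.atTop (nhds 1) := by
    have := tendsto_setIntegral_of_monotone (μ := volume) (f := f)
      (fun n : ℕ => measurableSet_Ioc) hmono (by rw [hU]; exact hf.integrableOn)
    rwa [hU, hf.total] at this
  have : ∀ᶠ n : ℕ in Filter.atTop, 1 - p < ∫ t in Set.Ioc (0:ℝ) n, f t :=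
    htend.eventually (eventually_gt_nhds (by linarith))
  obtain ⟨n, hn⟩ := this.exists
  refine ⟨n, Nat.cast_nonneg n, ?_⟩
  have := hf.ccdf_split (le_refl (0:ℝ)) (Nat.cast_nonneg n)
  have h0 : ccdf f 0 = 1 := hf.total
  linarith

lemma chainFn_nonneg_ccdf_le (hf : IsTailDensity f) {p : ℝ} (hp : 0 < p) :
    0 ≤ chainFn f p ∧ ccdf f (chainFn f p) ≤ p := by
  set S := {s : ℝ | 0 ≤ s ∧ ccdf f s ≤ p} with hS
  have hne : S.Nonempty := hf.exists_ccdf_le hp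
  have h0 : 0 ≤ sInf S := le_csInf hne (fun s hs => hs.1)
  refine ⟨h0, ?_⟩
  by_contra hlt
  push_neg at hlt
  set m := sInf S with hm
  rw [chainFn, ← hS, ← hm] at hlt
  set ε := ccdf f m - p with hε
  have hεpos : 0 < ε := by simp only [hε]; linarith
  have hfm : 0 ≤ f m := hf.nonneg m h0
  set δ := ε / (f m + 1) with hδ
  have hδpos : 0 < δ := div_pos hεpos (by linarith)
  obtain ⟨s, hsS, hslt⟩ := exists_lt_of_csInf_lt hne
    (show sInf S < m + δ by simp only [m]; linarith [le_refl (sInf S)])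
  have hms : m ≤ s := csInf_le ⟨0, fun t ht => ht.1⟩ hsS
  have hbound := hf.ccdf_sub_le h0 hms
  have h1 : f m * (s - m) ≤ f m * δ :=
    mul_le_mul_of_nonneg_left (by linarith) hfm
  have h2 : f m * δ < ε := by
    rw [hδ, mul_div_assoc']
    rw [div_lt_iff₀ (by linarith : (0:ℝ) < f m + 1)]
    nlinarith
  have := hsS.2
  linarith

end IsTailDensity

namespace ChainingTree

variable {X : Type*} [MetricSpace X] [Fintype X] (C : ChainingTree X)

lemma parent_ne_self {x : X} (hx : x ≠ C.root) : x ≠ C.parent x := by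
  intro h
  obtain ⟨n, hn⟩ := C.reaches_root x
  rw [Function.iterate_fixed h.symm n] at hn
  exact hx hn

lemma iterate_card_eq_root (x : X) : C.parent^[Fintype.card X] x = C.root := by
  classical
  obtain ⟨n, hn⟩ := C.reaches_root x
  have hQ : ∃ k : ℕ, C.parent^[k] x = C.root := ⟨n, hn⟩
  set m := Nat.find hQ with hmdef
  have hm : C.parent^[m] x = C.root := Nat.find_spec hQ
  have key : ∀ i j : ℕ, i < j → j ≤ m → C.parent^[i] x ≠ C.parent^[j] x := by
    intro i j hij hjm heq
    have hroot : C.parent^[m - j + i] x = C.root := by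
      have h1 : C.parent^[m - j] (C.parent^[j] x) = C.root := by
        rw [← Function.iterate_add_apply]
        rw [show m - j + j = m by omega]
        exact hm
      rw [← heq, ← Function.iterate_add_apply] at h1
      exact h1
    exact Nat.find_min hQ (show m - j + i < m by omega) hroot
  have hinj : Function.Injective (fun i : Fin (m + 1) => C.parent^[i.val] x) := by
    intro i j hij
    by_contra hne
    rcases lt_or_gt_of_ne (fun h : i = j => hne h) with h | h
    · exact key i.val j.val h (Nat.lt_succ_iff.mp j.isLt) hij
    · exact key j.val i.val h (Nat.lt_succ_iff.mp i.isLt) hij.symm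
  have hcard : m + 1 ≤ Fintype.card X := by
    simpa using Fintype.card_le_of_injective _ hinj
  obtain ⟨k, hk⟩ : ∃ k : ℕ, Fintype.card X = k + m := ⟨Fintype.card X - m, by omega⟩
  rw [hk, Function.iterate_add_apply, hm, Function.iterate_fixed C.parent_root]

end ChainingTree

/-- let `(Z_x)_{x∈X}` be real random variables on a probability
space `(Ω, P)`, indexed by a finite metric space `X`, satisfying the tail bound
`P(|Z_u − Z_v| ≥ d(u,v)·s) ≤ F(s)` for all distinct `u, v` and `s ≥ 0`. Then for
any chaining tree `C` for `X` (with edge lengths computed via `h = F⁻¹`),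
`P(max_{x₁,x₂} (Z_{x₁} − Z_{x₂}) > 2·val_h(C)) ≤ 1/2`. -/
theorem stmt18 {X : Type*} [MetricSpace X] [Fintype X]
    (f : ℝ → ℝ) (hf : IsTailDensity f)
    {Ω : Type*} [MeasurableSpace Ω] (P : Measure Ω) [IsProbabilityMeasure P]
    (Z : X → Ω → ℝ) (hZmeas : ∀ x, Measurable (Z x))
    (htail : ∀ u v : X, u ≠ v → ∀ s : ℝ, 0 ≤ s →
      P {ω | dist u v * s ≤ |Z u ω - Z v ω|} ≤ ENNReal.ofReal (ccdf f s))
    (C : ChainingTree X) :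
    P {ω | ∃ x₁ x₂ : X, 2 * ctVal f C < Z x₁ ω - Z x₂ ω} ≤ 1/2 := by
  letI := Classical.decEq X
  set E : X → Set Ω := fun u =>
    {ω | dist u (C.parent u) * chainFn f (C.prob u) ≤ |Z u ω - Z (C.parent u) ω|}
    with hE
  set s : Finset X := Finset.univ.erase C.root with hs
  have hsub : {ω | ∃ x₁ x₂ : X, 2 * ctVal f C < Z x₁ ω - Z x₂ ω} ⊆ ⋃ u ∈ s, E u := by
    intro ω hω
    by_contra hnot
    simp only [Set.mem_iUnion, not_exists] at hnot
    have hgood : ∀ u : X, u ≠ C.root → |Z u ω - Z (C.parent u) ω| ≤ edgeLen f C u := by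
      intro u hu
      have : ω ∉ E u := hnot u (Finset.mem_erase.mpr ⟨hu, Finset.mem_univ u⟩)
      rw [hE] at this
      simp only [Set.mem_setOf_eq, not_le] at this
      exact this.le
    have key : ∀ x : X, |Z x ω - Z C.root ω| ≤ pathLen f C x := by
      intro x
      have htel : Z x ω - Z C.root ω =
          ∑ n ∈ Finset.range (Fintype.card X),
            (Z (C.parent^[n] x) ω - Z (C.parent^[n+1] x) ω) := by
        rw [Finset.sum_range_sub' (fun n => Z (C.parent^[n] x) ω)]
        rw [C.iterate_card_eq_root x]
        simp
      rw [htel]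
      refine le_trans (Finset.abs_sum_le_sum_abs _ _) ?_
      unfold pathLen
      refine Finset.sum_le_sum fun n _ => ?_
      set u := C.parent^[n] x with hu
      have hsucc : C.parent^[n+1] x = C.parent u := by
        rw [Function.iterate_succ_apply']
      rw [hsucc]
      by_cases hur : u = C.root
      · rw [hur]
        simp [edgeLen, C.parent_root]
      · exact hgood u hur
    obtain ⟨x₁, x₂, hx⟩ := hω
    have hbdd : BddAbove (Set.range (pathLen f C)) :=
      Set.Finite.bddAbove (Set.finite_range _)
    have h1 : pathLen f C x₁ ≤ ctVal f C := le_ciSup hbdd x₁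
    have h2 : pathLen f C x₂ ≤ ctVal f C := le_ciSup hbdd x₂
    have k1 := key x₁
    have k2 := key x₂
    rw [abs_le] at k1 k2
    linarith [k1.2, k2.1]
  calc P {ω | ∃ x₁ x₂ : X, 2 * ctVal f C < Z x₁ ω - Z x₂ ω}
      ≤ P (⋃ u ∈ s, E u) := measure_mono hsub
    _ ≤ ∑ u ∈ s, P (E u) := measure_biUnion_finset_le s E
    _ ≤ ∑ u ∈ s, ENNReal.ofReal (C.prob u) := by
        refine Finset.sum_le_sum fun u hu => ?_
        have hu' : u ≠ C.root := (Finset.mem_erase.mp hu).1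
        have hpu := C.prob_mem u hu'
        obtain ⟨hh0, hhle⟩ := hf.chainFn_nonneg_ccdf_le hpu.1
        refine le_trans (htail u (C.parent u) (C.parent_ne_self hu') _ hh0) ?_
        exact ENNReal.ofReal_le_ofReal hhle
    _ = ENNReal.ofReal (∑ u ∈ s, C.prob u) :=
        (ENNReal.ofReal_sum_of_nonneg
          (fun u hu => (C.prob_mem u (Finset.mem_erase.mp hu).1).1.le)).symm
    _ ≤ ENNReal.ofReal (1/2) := by
        refine ENNReal.ofReal_le_ofReal ?_
        have := C.prob_sum
        unfold edgeLabelSum at this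
        convert this using 2
    _ = 1/2 := by
        rw [ENNReal.ofReal_div_of_pos (by norm_num)]
        norm_num
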